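/- For each p > 0, the function r ↦ I_p(r) is continuously differentiable on (0, ∞) and its derivative at r = 1 equals I_p(1)/2. -/

import Mathlib

open MeasureTheory

noncomputable def e (t : ℝ) : ℂ := Complex.exp (2 * Real.pi * Complex.I * t)

/-- I_p(r) = ∫₀¹ |1 - r^{1/p} e(t)|^p dt -/
noncomputable def Ip (p r : ℝ) : ℝ :=
  ∫ t in (0:ℝ)..1, ‖1 - ((r ^ (1/p) : ℝ) : ℂ) * e t‖ ^ p

open Set Metric Real intervalIntegral Interval

namespace IpAux

noncomputable def Q (s t : ℝ) : ℝ :=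
  (1 - s * Real.cos (2 * Real.pi * t)) ^ 2 + (s * Real.sin (2 * Real.pi * t)) ^ 2

lemma Q_nonneg (s t : ℝ) : 0 ≤ Q s t := by unfold Q; positivity

lemma Q_eq (s t : ℝ) : Q s t = 1 - 2 * s * Real.cos (2 * Real.pi * t) + s ^ 2 := by
  have hpy := Real.sin_sq_add_cos_sq (2 * Real.pi * t)
  unfold Q; linear_combination (s ^ 2) * hpy

lemma abs_eq (p s t : ℝ) :
    ‖1 - (s : ℂ) * e t‖ ^ p = Q s t ^ (p / 2) := by
  have hre : (1 - (s : ℂ) * e t).re = 1 - s * Real.cos (2 * Real.pi * t) := by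
    simp [e, Complex.exp_re, Complex.exp_im]
  have him : (1 - (s : ℂ) * e t).im = -(s * Real.sin (2 * Real.pi * t)) := by
    simp [e, Complex.exp_re, Complex.exp_im]
  have hQ : (1 - (s:ℂ) * e t).re * (1 - (s:ℂ) * e t).re +
      (1 - (s:ℂ) * e t).im * (1 - (s:ℂ) * e t).im = Q s t := by
    rw [hre, him]; unfold Q; ring
  rw [Complex.norm_def, Complex.normSq_apply, hQ, Real.sqrt_eq_rpow,
    ← Real.rpow_mul (Q_nonneg s t)]
  congr 1
  ring

lemma sin_ae : ∀ᵐ t : ℝ, Real.sin (2 * Real.pi * t) ≠ 0 := by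
  have hsub : {t : ℝ | Real.sin (2 * Real.pi * t) = 0} ⊆ Set.range (fun n : ℤ => (n : ℝ) / 2) := by
    intro t ht
    rcases Real.sin_eq_zero_iff.1 ht with ⟨n, hn⟩
    exact ⟨n, by field_simp at hn ⊢; nlinarith [Real.pi_pos, hn]⟩
  have := ((Set.countable_range _).mono hsub).ae_notMem (volume : Measure ℝ)
  filter_upwards [this] with t ht
  exact ht

lemma Q_pos {s t : ℝ} (hs : 0 < s) (hsn : Real.sin (2 * Real.pi * t) ≠ 0) : 0 < Q s t := by
  have h2 : 0 < (s * Real.sin (2 * Real.pi * t)) ^ 2 :=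
    (sq_nonneg _).lt_of_ne (Ne.symm (pow_ne_zero 2 (mul_ne_zero hs.ne' hsn)))
  exact add_pos_of_nonneg_of_pos (sq_nonneg _) h2

lemma hasDerivAt_Q (t s : ℝ) :
    HasDerivAt (fun s => Q s t) (2 * s - 2 * Real.cos (2 * Real.pi * t)) s := by
  have h1 : HasDerivAt (fun s : ℝ => 1 - s * Real.cos (2 * Real.pi * t))
      (-Real.cos (2 * Real.pi * t)) s := by
    simpa using ((hasDerivAt_id s).mul_const (Real.cos (2 * Real.pi * t))).const_sub 1
  have h2 : HasDerivAt (fun s : ℝ => s * Real.sin (2 * Real.pi * t))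
      (Real.sin (2 * Real.pi * t)) s := by
    simpa using (hasDerivAt_id s).mul_const (Real.sin (2 * Real.pi * t))
  have h := (h1.pow 2).add (h2.pow 2)
  refine h.congr_deriv (Eq.symm ?_)
  have hpy := Real.sin_sq_add_cos_sq (2 * Real.pi * t)
  push_cast
  linear_combination (-2 * s) * hpy

lemma quarter {u : ℝ} (h0 : 0 ≤ u) (h4 : u ≤ 1/4) : 4 * u ≤ Real.sin (2 * Real.pi * u) := by
  have hπ := Real.pi_pos
  have h := Real.mul_le_sin (x := 2 * Real.pi * u) (by positivity) (by nlinarith)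
  have : 2 / Real.pi * (2 * Real.pi * u) = 4 * u := by field_simp; ring
  linarith [this ▸ h]

lemma jordan {t : ℝ} (ht0 : 0 ≤ t) (ht1 : t ≤ 1) :
    4 * min t (min |t - 1/2| (1 - t)) ≤ |Real.sin (2 * Real.pi * t)| := by
  set m := min t (min |t - 1/2| (1 - t)) with hm
  have hm1 : m ≤ t := min_le_left _ _
  have hm2 : m ≤ |t - 1/2| := le_trans (min_le_right _ _) (min_le_left _ _)
  have hm3 : m ≤ 1 - t := le_trans (min_le_right _ _) (min_le_right _ _)
  rcases le_total t (1/4) with h | h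
  · calc 4 * m ≤ 4 * t := by linarith
      _ ≤ Real.sin (2 * Real.pi * t) := quarter ht0 h
      _ ≤ |Real.sin (2 * Real.pi * t)| := le_abs_self _
  · rcases le_total t (1/2) with h' | h'
    · have habs : |t - 1/2| = 1/2 - t := by rw [abs_of_nonpos (by linarith)]; ring
      have hq := quarter (u := 1/2 - t) (by linarith) (by linarith)
      have hsin : Real.sin (2 * Real.pi * (1/2 - t)) = Real.sin (2 * Real.pi * t) := by
        have : 2 * Real.pi * (1/2 - t) = Real.pi - 2 * Real.pi * t := by ring
        rw [this, Real.sin_pi_sub]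
      calc 4 * m ≤ 4 * (1/2 - t) := by rw [habs] at hm2; linarith
        _ ≤ Real.sin (2 * Real.pi * t) := by rw [← hsin]; exact hq
        _ ≤ |Real.sin (2 * Real.pi * t)| := le_abs_self _
    · rcases le_total t (3/4) with h'' | h''
      · have habs : |t - 1/2| = t - 1/2 := by rw [abs_of_nonneg (by linarith)]
        have hq := quarter (u := t - 1/2) (by linarith) (by linarith)
        have hsin : Real.sin (2 * Real.pi * (t - 1/2)) = -Real.sin (2 * Real.pi * t) := by
          have : 2 * Real.pi * (t - 1/2) = 2 * Real.pi * t - Real.pi := by ring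
          rw [this, Real.sin_sub_pi]
        calc 4 * m ≤ 4 * (t - 1/2) := by rw [habs] at hm2; linarith
          _ ≤ -Real.sin (2 * Real.pi * t) := by rw [← hsin]; exact hq
          _ ≤ |Real.sin (2 * Real.pi * t)| := neg_le_abs _
      · have hq := quarter (u := 1 - t) (by linarith) (by linarith)
        have hsin : Real.sin (2 * Real.pi * (1 - t)) = -Real.sin (2 * Real.pi * t) := by
          have : 2 * Real.pi * (1 - t) = 2 * Real.pi - 2 * Real.pi * t := by ring
          rw [this, Real.sin_two_pi_sub]
        calc 4 * m ≤ 4 * (1 - t) := by linarith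
          _ ≤ -Real.sin (2 * Real.pi * t) := by rw [← hsin]; exact hq
          _ ≤ |Real.sin (2 * Real.pi * t)| := neg_le_abs _

lemma sin_rpow_integrable {p : ℝ} (hp : 0 < p) :
    IntervalIntegrable (fun t => |Real.sin (2 * Real.pi * t)| ^ (p - 1)) volume 0 1 := by
  have hcont : Continuous fun t : ℝ => |Real.sin (2 * Real.pi * t)| :=
    (Real.continuous_sin.comp (continuous_const.mul continuous_id)).abs
  rcases le_or_gt 1 p with hp1 | hp1
  · exact (hcont.rpow_const fun t => Or.inr (by linarith)).intervalIntegrable 0 1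
  · have hr : (-1 : ℝ) < p - 1 := by linarith
    have hr0 : p - 1 ≤ 0 := by linarith
    have i1 : IntervalIntegrable (fun x : ℝ => x ^ (p - 1)) volume 0 1 :=
      intervalIntegral.intervalIntegrable_rpow' hr
    have i2 : IntervalIntegrable (fun x : ℝ => (1 - x) ^ (p - 1)) volume 0 1 := by
      simpa using
        ((intervalIntegral.intervalIntegrable_rpow' hr (a := 0) (b := 1)).comp_sub_left 1).symm
    have habs0 : IntervalIntegrable (fun x : ℝ => |x| ^ (p - 1)) volume 0 (1/2) := by
      have h0 := intervalIntegral.intervalIntegrable_rpow' hr (a := 0) (b := 1/2)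
      rw [intervalIntegrable_iff, uIoc_of_le (by norm_num : (0:ℝ) ≤ 1/2)] at h0 ⊢
      exact h0.congr_fun (fun x hx => by rw [abs_of_pos hx.1]) measurableSet_Ioc
    have habsneg : IntervalIntegrable (fun x : ℝ => |x| ^ (p - 1)) volume (-(1/2)) 0 := by
      have := ((IntervalIntegrable.iff_comp_neg (f := fun x : ℝ => |x| ^ (p - 1))).mp habs0)
      simp only [abs_neg, neg_zero, neg_neg] at this
      exact this.symm
    have i3 : IntervalIntegrable (fun x : ℝ => |x - 1/2| ^ (p - 1)) volume 0 1 := by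
      have := (habsneg.trans habs0).comp_sub_right (1/2)
      norm_num at this
      exact this
    set g : ℝ → ℝ := fun t =>
      (4:ℝ) ^ (p-1) * (t ^ (p-1) + |t - 1/2| ^ (p-1) + (1 - t) ^ (p-1)) with hg
    have hg_int : IntervalIntegrable g volume 0 1 := ((i1.add i3).add i2).const_mul _
    rw [intervalIntegrable_iff, uIoc_of_le (zero_le_one)] at hg_int ⊢
    apply Integrable.mono' hg_int
    · exact (hcont.measurable.pow_const (p-1)).aestronglyMeasurable
    · rw [ae_restrict_iff' measurableSet_Ioc]
      have hnm : ∀ᵐ t : ℝ, t ∉ ({1/2, 1} : Set ℝ) :=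
        (Set.Finite.countable (Set.toFinite _)).ae_notMem volume
      filter_upwards [hnm] with t hnm ht
      have ht0 : 0 < t := ht.1
      have ht1 : t < 1 := lt_of_le_of_ne ht.2 (by simpa using fun h => hnm (by simp [h]))
      have hthalf : t ≠ 1/2 := fun h => hnm (by simp [h])
      set m := min t (min |t - 1/2| (1 - t)) with hm
      have hmpos : 0 < m := by
        apply lt_min (by linarith)
        exact lt_min (abs_pos.mpr (sub_ne_zero.mpr hthalf)) (by linarith)
      have hjordan := jordan ht0.le ht1.le
      have step1 : |Real.sin (2 * Real.pi * t)| ^ (p-1) ≤ (4 * m) ^ (p-1) :=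
        Real.rpow_le_rpow_of_nonpos (by linarith) hjordan hr0
      have step2 : ((4:ℝ) * m) ^ (p-1) = (4:ℝ)^(p-1) * m ^ (p-1) :=
        Real.mul_rpow (by norm_num) hmpos.le
      have step3 : m ^ (p-1) ≤ t ^ (p-1) + |t - 1/2| ^ (p-1) + (1 - t) ^ (p-1) := by
        have e1 : 0 ≤ t ^ (p-1) := Real.rpow_nonneg ht0.le _
        have e2 : 0 ≤ |t - 1/2| ^ (p-1) := Real.rpow_nonneg (abs_nonneg _) _
        have e3 : 0 ≤ (1 - t) ^ (p-1) := Real.rpow_nonneg (by linarith) _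
        rcases le_total t (min |t - 1/2| (1 - t)) with hc | hc
        · rw [hm, min_eq_left hc]; linarith
        · rw [hm, min_eq_right hc]
          rcases le_total |t - 1/2| (1 - t) with hc2 | hc2
          · rw [min_eq_left hc2]; linarith
          · rw [min_eq_right hc2]; linarith
      have hnorm : ‖|Real.sin (2 * Real.pi * t)| ^ (p-1)‖ = |Real.sin (2 * Real.pi * t)| ^ (p-1) :=
        Real.norm_of_nonneg (Real.rpow_nonneg (abs_nonneg _) _)
      rw [hnorm, hg]
      calc |Real.sin (2 * Real.pi * t)| ^ (p-1) ≤ (4 * m) ^ (p-1) := step1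
        _ = (4:ℝ)^(p-1) * m ^ (p-1) := step2
        _ ≤ (4:ℝ)^(p-1) * (t ^ (p-1) + |t - 1/2| ^ (p-1) + (1 - t) ^ (p-1)) :=
            mul_le_mul_of_nonneg_left step3 (Real.rpow_nonneg (by norm_num) _)

noncomputable def F (p s t : ℝ) : ℝ := Q s t ^ (p / 2)
noncomputable def Fd (p s t : ℝ) : ℝ :=
  p * (s - Real.cos (2 * Real.pi * t)) * Q s t ^ (p / 2 - 1)
noncomputable def J (p s : ℝ) : ℝ := ∫ t in (0:ℝ)..1, F p s t
noncomputable def Jd (p s : ℝ) : ℝ := ∫ t in (0:ℝ)..1, Fd p s t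
noncomputable def bnd (p s₀ t : ℝ) : ℝ :=
  p * (1 + 3 * s₀) ^ (p - 1) + (p * (s₀ / 2) ^ (p - 1)) * |Real.sin (2 * Real.pi * t)| ^ (p - 1)

lemma continuous_Q (x : ℝ) : Continuous fun t => Q x t := by
  unfold Q; fun_prop

lemma continuous_Q' (t : ℝ) : Continuous fun x => Q x t := by
  unfold Q; fun_prop

lemma hasDerivAt_F {p s t : ℝ} (hq : Q s t ≠ 0) :
    HasDerivAt (fun s => F p s t) (Fd p s t) s := by
  have h := (Real.hasDerivAt_rpow_const (p := p / 2) (Or.inl hq)).comp s (hasDerivAt_Q t s)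
  refine h.congr_deriv (Eq.symm ?_)
  unfold Fd
  ring

lemma Fd_bound {p s₀ x t : ℝ} (hp : 0 < p) (hs₀ : 0 < s₀) (hx : x ∈ ball s₀ (s₀ / 2))
    (hsn : Real.sin (2 * Real.pi * t) ≠ 0) : ‖Fd p x t‖ ≤ bnd p s₀ t := by
  rw [mem_ball, Real.dist_eq] at hx
  have hxl : s₀ / 2 < x := by cases' abs_lt.1 hx with h1 h2; linarith
  have hxu : x < 3 * s₀ / 2 := by cases' abs_lt.1 hx with h1 h2; linarith
  have hx0 : 0 < x := by linarith
  set c := Real.cos (2 * Real.pi * t) with hc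
  set sn := Real.sin (2 * Real.pi * t) with hsn'
  have hq0 : 0 < Q x t := Q_pos hx0 hsn
  have hpy : sn ^ 2 + c ^ 2 = 1 := Real.sin_sq_add_cos_sq _
  have hc1 : -1 ≤ c := Real.neg_one_le_cos _
  have hc2 : c ≤ 1 := Real.cos_le_one _
  have step1 : ‖Fd p x t‖ = p * |x - c| * Q x t ^ (p / 2 - 1) := by
    rw [Real.norm_eq_abs]
    unfold Fd
    rw [abs_mul, abs_mul, abs_of_pos hp, abs_of_nonneg (Real.rpow_nonneg hq0.le _)]
  have step2 : |x - c| ≤ Q x t ^ (1/2 : ℝ) := by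
    rw [← Real.sqrt_eq_rpow, ← Real.sqrt_sq_eq_abs]
    apply Real.sqrt_le_sqrt
    unfold Q
    rw [← hc, ← hsn']
    have key : x^2*(sn^2+c^2) = x^2 := by rw [hpy]; ring
    nlinarith [key, sq_nonneg sn]
  have step3 : Q x t ^ (1/2 : ℝ) * Q x t ^ (p / 2 - 1) = Q x t ^ ((p - 1) / 2) := by
    rw [← Real.rpow_add hq0]
    congr 1
    ring
  have step4 : Q x t ^ ((p - 1) / 2) ≤ (1 + 3 * s₀) ^ (p - 1) + (s₀ / 2 * |sn|) ^ (p - 1) := by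
    rcases le_or_gt 1 p with hp1 | hp1
    · have hqle : Q x t ≤ (1 + 3 * s₀) ^ 2 := by
        unfold Q
        rw [← hc, ← hsn']
        have key : x^2*(sn^2+c^2) = x^2 := by rw [hpy]; ring
        nlinarith [key, mul_le_mul_of_nonneg_left hc1 hx0.le]
      have h1 : Q x t ^ ((p - 1) / 2) ≤ ((1 + 3 * s₀) ^ 2) ^ ((p - 1) / 2 : ℝ) :=
        Real.rpow_le_rpow hq0.le hqle (by linarith)
      have h2 : (((1 + 3 * s₀) ^ 2 : ℝ)) ^ ((p - 1) / 2 : ℝ) = (1 + 3 * s₀) ^ (p - 1) := by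
        rw [← Real.rpow_two, ← Real.rpow_mul (by positivity)]
        congr 1
        ring
      have h3 : (0:ℝ) ≤ (s₀ / 2 * |sn|) ^ (p - 1) := Real.rpow_nonneg (by positivity) _
      linarith [h2 ▸ h1]
    · have hsnpos : 0 < |sn| := abs_pos.mpr hsn
      have hgpos : 0 < (s₀ / 2 * |sn|) ^ 2 := by positivity
      have hgle : (s₀ / 2 * |sn|) ^ 2 ≤ Q x t := by
        unfold Q
        rw [← hc, ← hsn']
        have h5 : (s₀/2)^2 * sn^2 ≤ x^2 * sn^2 :=
          mul_le_mul_of_nonneg_right (by nlinarith) (sq_nonneg _)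
        nlinarith [h5, sq_nonneg (1 - x * c), sq_abs sn, abs_nonneg sn]
      have h1 : Q x t ^ ((p - 1) / 2) ≤ ((s₀ / 2 * |sn|) ^ 2 : ℝ) ^ ((p - 1) / 2 : ℝ) :=
        Real.rpow_le_rpow_of_nonpos hgpos hgle (by linarith)
      have h2 : (((s₀ / 2 * |sn|) ^ 2 : ℝ)) ^ ((p - 1) / 2 : ℝ) = (s₀ / 2 * |sn|) ^ (p - 1) := by
        rw [← Real.rpow_two, ← Real.rpow_mul (by positivity)]
        congr 1
        ring
      have h3 : (0:ℝ) ≤ (1 + 3 * s₀) ^ (p - 1) := Real.rpow_nonneg (by positivity) _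
      linarith [h2 ▸ h1]
  have hmul : (s₀ / 2 * |sn|) ^ (p - 1) = (s₀ / 2) ^ (p - 1) * |sn| ^ (p - 1) :=
    Real.mul_rpow (by positivity) (abs_nonneg _)
  calc ‖Fd p x t‖ = p * |x - c| * Q x t ^ (p / 2 - 1) := step1
    _ ≤ p * (Q x t ^ (1/2 : ℝ) * Q x t ^ (p / 2 - 1)) := by
        rw [mul_assoc]
        apply mul_le_mul_of_nonneg_left _ hp.le
        exact mul_le_mul_of_nonneg_right step2 (Real.rpow_nonneg hq0.le _)
    _ = p * Q x t ^ ((p - 1) / 2) := by rw [step3]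
    _ ≤ p * ((1 + 3 * s₀) ^ (p - 1) + (s₀ / 2 * |sn|) ^ (p - 1)) :=
        mul_le_mul_of_nonneg_left step4 hp.le
    _ = bnd p s₀ t := by unfold bnd; rw [hmul]; ring

lemma meas_F (p x : ℝ) (hp : 0 < p) :
    AEStronglyMeasurable (F p x) (volume.restrict (Ι (0:ℝ) 1)) := by
  have : Continuous (F p x) := by
    apply (continuous_Q x).rpow_const
    intro t
    exact Or.inr (by positivity)
  exact this.aestronglyMeasurable

lemma meas_Fd (p x : ℝ) : AEStronglyMeasurable (Fd p x) (volume.restrict (Ι (0:ℝ) 1)) := by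
  have h1 : Measurable fun t => Q x t := (continuous_Q x).measurable
  have h2 : Measurable (Fd p x) := by
    apply Measurable.mul
    · exact (measurable_const.mul
        ((measurable_const.sub ((Real.continuous_cos.comp (by fun_prop)).measurable))))
    · exact h1.pow_const _
  exact h2.aestronglyMeasurable

lemma int_F (p s₀ : ℝ) (hp : 0 < p) : IntervalIntegrable (F p s₀) volume 0 1 := by
  have : Continuous (F p s₀) := by
    apply (continuous_Q s₀).rpow_const
    intro t
    exact Or.inr (by positivity)
  exact this.intervalIntegrable 0 1

lemma bnd_integrable {p s₀ : ℝ} (hp : 0 < p) :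
    IntervalIntegrable (bnd p s₀) volume 0 1 := by
  unfold bnd
  exact (_root_.intervalIntegrable_const).add ((sin_rpow_integrable hp).const_mul _)

lemma hasDerivAt_J {p s₀ : ℝ} (hp : 0 < p) (hs₀ : 0 < s₀) :
    HasDerivAt (J p) (Jd p s₀) s₀ := by
  have hε : 0 < s₀ / 2 := by linarith
  have h_bound : ∀ᵐ t : ℝ, t ∈ Ι (0:ℝ) 1 → ∀ x ∈ ball s₀ (s₀/2), ‖Fd p x t‖ ≤ bnd p s₀ t := by
    filter_upwards [sin_ae] with t hsn _ x hx
    exact Fd_bound hp hs₀ hx hsn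
  have h_diff : ∀ᵐ t : ℝ, t ∈ Ι (0:ℝ) 1 →
      ∀ x ∈ ball s₀ (s₀/2), HasDerivAt (fun x => F p x t) (Fd p x t) x := by
    filter_upwards [sin_ae] with t hsn _ x hx
    rw [mem_ball, Real.dist_eq] at hx
    have hx0 : 0 < x := by cases' abs_lt.1 hx with h1 h2; linarith
    exact hasDerivAt_F (Q_pos hx0 hsn).ne'
  exact (intervalIntegral.hasDerivAt_integral_of_dominated_loc_of_deriv_le (ball_mem_nhds s₀ hε)
    (Filter.Eventually.of_forall fun x => meas_F p x hp) (int_F p s₀ hp) (meas_Fd p s₀)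
    h_bound (bnd_integrable hp) h_diff).2

lemma continuousAt_Jd {p s₀ : ℝ} (hp : 0 < p) (hs₀ : 0 < s₀) :
    ContinuousAt (Jd p) s₀ := by
  have hε : 0 < s₀ / 2 := by linarith
  have h_bound : ∀ᶠ x in nhds s₀, ∀ᵐ t : ℝ, t ∈ Ι (0:ℝ) 1 → ‖Fd p x t‖ ≤ bnd p s₀ t := by
    filter_upwards [ball_mem_nhds s₀ hε] with x hx
    filter_upwards [sin_ae] with t hsn _
    exact Fd_bound hp hs₀ hx hsn
  have h_cont : ∀ᵐ t : ℝ, t ∈ Ι (0:ℝ) 1 → ContinuousAt (fun x => Fd p x t) s₀ := by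
    filter_upwards [sin_ae] with t hsn _
    have hq : Q s₀ t ≠ 0 := (Q_pos hs₀ hsn).ne'
    apply ContinuousAt.mul
    · exact (continuousAt_const.mul (continuousAt_id.sub continuousAt_const))
    · exact ((continuous_Q' t).continuousAt).rpow_const (Or.inl hq)
  exact intervalIntegral.continuousAt_of_dominated_interval
    (Filter.Eventually.of_forall fun x => meas_Fd p x) h_bound (bnd_integrable hp) h_cont

lemma contDiffOn_J {p : ℝ} (hp : 0 < p) : ContDiffOn ℝ 1 (J p) (Ioi (0:ℝ)) := by
  have hiff := contDiffOn_succ_iff_deriv_of_isOpen (𝕜 := ℝ) (n := 0) (f := J p)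
    (isOpen_Ioi (a := (0:ℝ)))
  rw [zero_add] at hiff
  rw [hiff]
  refine ⟨fun s hs => (hasDerivAt_J hp hs).differentiableAt.differentiableWithinAt, ?_, ?_⟩
  · intro h; simp at h
  · rw [contDiffOn_zero]
    intro s hs
    have hev : Jd p =ᶠ[nhds s] deriv (J p) :=
      Filter.eventuallyEq_of_mem (Ioi_mem_nhds hs) fun x hx => ((hasDerivAt_J hp hx).deriv).symm
    exact ((continuousAt_Jd hp hs).congr hev).continuousWithinAt

lemma Ip_eq (p : ℝ) (r : ℝ) : Ip p r = J p (r ^ (1/p)) := by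
  unfold Ip J F
  apply intervalIntegral.integral_congr
  intro t _
  exact abs_eq p _ t

lemma funeq {p : ℝ} (hp : 0 < p) {r : ℝ} (hr : 0 < r) : Ip p r = r * Ip p r⁻¹ := by
  have ha : 0 < r ^ (1/p) := Real.rpow_pos_of_pos hr _
  rw [Ip_eq, Ip_eq]
  have hainv : (r⁻¹) ^ (1/p) = (r ^ (1/p))⁻¹ := Real.inv_rpow hr.le _
  rw [hainv]
  set a := r ^ (1/p) with hadef
  have key : ∀ t, F p a t = r * F p a⁻¹ t := by
    intro t
    unfold F
    have hQ : Q a t = a ^ 2 * Q a⁻¹ t := by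
      rw [Q_eq, Q_eq]
      field_simp
      ring
    rw [hQ, Real.mul_rpow (sq_nonneg _) (Q_nonneg _ _)]
    congr 1
    rw [← Real.rpow_two, ← Real.rpow_mul ha.le, hadef, ← Real.rpow_mul hr.le]
    rw [show 1/p * (2 * (p/2)) = 1 by field_simp]
    exact Real.rpow_one r
  unfold J
  rw [← intervalIntegral.integral_const_mul]
  exact intervalIntegral.integral_congr fun t _ => key t

end IpAux

open IpAux in
theorem Ip_c1_and_deriv_at_one (p : ℝ) (hp : 0 < p) :
    ContDiffOn ℝ 1 (Ip p) (Set.Ioi (0:ℝ)) ∧ deriv (Ip p) 1 = Ip p 1 / 2 := by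
  have hcomp : Ip p = (J p) ∘ (fun r : ℝ => r ^ (1/p)) := funext fun r => Ip_eq p r
  constructor
  · rw [hcomp]
    refine (contDiffOn_J hp).comp ?_ ?_
    · intro r hr
      exact (Real.contDiffAt_rpow_const_of_ne (ne_of_gt hr)).contDiffWithinAt
    · intro r hr
      exact Real.rpow_pos_of_pos hr _
  · have h1J : HasDerivAt (J p) (Jd p 1) ((1:ℝ) ^ (1/p : ℝ)) := by
      rw [Real.one_rpow]; exact hasDerivAt_J hp one_pos
    have hrp : HasDerivAt (fun r : ℝ => r ^ (1/p)) ((1/p) * (1:ℝ) ^ (1/p - 1)) 1 :=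
      Real.hasDerivAt_rpow_const (Or.inl one_ne_zero)
    set d := Jd p 1 * ((1/p) * (1:ℝ) ^ (1/p - 1)) with hd
    have h1 : HasDerivAt (Ip p) d 1 := by
      rw [hcomp]; exact h1J.comp 1 hrp
    have hinv : HasDerivAt (fun r : ℝ => r⁻¹) (-1) 1 := by
      simpa using hasDerivAt_inv (one_ne_zero (α := ℝ))
    have hIpinv : HasDerivAt (fun r : ℝ => Ip p r⁻¹) (d * -1) 1 := by
      have h1' : HasDerivAt (Ip p) d ((1:ℝ)⁻¹) := by rw [inv_one]; exact h1
      exact h1'.comp 1 hinv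
    have hG : HasDerivAt (fun r : ℝ => r * Ip p r⁻¹) (1 * Ip p 1⁻¹ + 1 * (d * -1)) 1 :=
      (hasDerivAt_id 1).mul hIpinv
    have heq : (fun r : ℝ => r * Ip p r⁻¹) =ᶠ[nhds 1] Ip p :=
      Filter.eventuallyEq_of_mem (Ioi_mem_nhds one_pos) fun r hr => (funeq hp hr).symm
    have hG' : HasDerivAt (Ip p) (1 * Ip p 1⁻¹ + 1 * (d * -1)) 1 :=
      hG.congr_of_eventuallyEq heq.symm
    have hud : d = 1 * Ip p 1⁻¹ + 1 * (d * -1) := h1.unique hG'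
    rw [h1.deriv]
    rw [inv_one] at hud
    linarith
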